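/- Let c ≥ 2 and let (λ, μ) be a codimension-c decoration with k = ∑μⱼ. Then every part of λ satisfies λᵢ ≤ k. -/

import Mathlib

/-- Sort a list of integers in non-increasing order. -/
def rsort (l : List ℤ) : List ℤ := List.insertionSort (· ≥ ·) l

/-- Remove all non-positive parts (trailing zeros) from a partition. -/
def strip (l : List ℤ) : List ℤ := l.filter (fun x => 0 < x)

/-- The smallest minimal link of a codimension-`c` pair of partitions `(λ, μ)`:
choose the `c` largest parts of `λ` (padding with zeros if needed), shift them by
`p = (c-2)k + 1 - (λ₁ + ⋯ + λ_c)` where `k = ∑ μⱼ`, merge with `μ` and re-sort;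
the other partition becomes `(λ_{c+1}, …, λ_b)`. -/
def smlink (c : ℕ) (P : List ℤ × List ℤ) : List ℤ × List ℤ :=
  let p : ℤ := ((c : ℤ) - 2) * P.2.sum + 1 - (P.1.take c).sum
  (strip (rsort ((P.1.take c ++ List.replicate (c - P.1.length) 0).map (· + p) ++ P.2)),
   strip (P.1.drop c))

/-- The smallest minimal link of `P` produces nonnegative parts, i.e. `λ_c + p ≥ 0`. -/
def ValidLink (c : ℕ) (P : List ℤ × List ℤ) : Prop :=
  0 ≤ P.1.getD (c - 1) 0 + (((c : ℤ) - 2) * P.2.sum + 1 - (P.1.take c).sum)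

/-- A partition: a non-increasing list of positive integers. -/
def IsPartition (l : List ℤ) : Prop := l.Pairwise (· ≥ ·) ∧ ∀ x ∈ l, 0 < x

/-- A codimension-`c` decoration: a pair of partitions reachable to the complete
intersection pair `((1^c), (1))` by finitely many smallest minimal links, all of
whose intermediate links are valid (have nonnegative parts). -/
def IsDecoration (c : ℕ) (P : List ℤ × List ℤ) : Prop :=
  IsPartition P.1 ∧ IsPartition P.2 ∧
  ∃ n : ℕ, (∀ m < n, ValidLink c ((smlink c)^[m] P)) ∧
    (smlink c)^[n] P = (List.replicate c 1, [1])

lemma strip_sum {l : List ℤ} (h : ∀ x ∈ l, 0 ≤ x) : (strip l).sum = l.sum := by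
  induction l with
  | nil => rfl
  | cons a t ih =>
    have ht := ih (fun x hx => h x (List.mem_cons_of_mem _ hx))
    by_cases ha : 0 < a
    · simp [strip, List.filter_cons, ha] at *; omega
    · have : a = 0 := le_antisymm (not_lt.mp ha) (h a List.mem_cons_self)
      simp [strip, List.filter_cons, ha] at *; omega

lemma sum_map_add (l : List ℤ) (p : ℤ) : (l.map (· + p)).sum = l.sum + l.length * p := by
  induction l with
  | nil => simp
  | cons a t ih => simp [ih]; ring

/-- Every element of the padded top-c list is at least λ_{c-1} (with default 0). -/
lemma take_ge_getD {l : List ℤ} (hs : l.Pairwise (· ≥ ·)) (hpos : ∀ x ∈ l, 0 < x)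
    {c : ℕ} (a : ℤ)
    (ha : a ∈ l.take c ++ List.replicate (c - l.length) 0) :
    l.getD (c-1) 0 ≤ a := by
  by_cases hlen : c ≤ l.length
  · rcases Nat.eq_zero_or_pos c with rfl | hc0
    · simp at ha
    have hrep : c - l.length = 0 := Nat.sub_eq_zero_of_le hlen
    rw [hrep] at ha
    simp only [List.replicate_zero, List.append_nil] at ha
    rcases List.mem_iff_getElem.mp ha with ⟨i, hi, rfl⟩
    have hi2 : i < c := by exact ((by simpa [List.length_take] using hi : i < c ∧ i < l.length)).1
    have hi3 : i < l.length := by omega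
    have hc1 : c - 1 < l.length := by omega
    have hget : (l.take c)[i]'hi = l[i]'hi3 := by
      simp [List.getElem_take]
    rw [hget]
    have := hs.rel_get_of_le (a := ⟨i, hi3⟩) (b := ⟨c-1, hc1⟩) (by simp; omega)
    simp only [List.get_eq_getElem] at this
    rw [List.getD_eq_getElem l 0 hc1]
    exact this
  · push_neg at hlen
    have : l.getD (c-1) 0 = 0 := by
      apply List.getD_eq_default
      omega
    rw [this]
    rcases List.mem_append.mp ha with h1 | h1
    · exact le_of_lt (hpos a (List.mem_of_mem_take h1))
    · have := List.eq_of_mem_replicate h1; omega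

lemma smlink_fst_sum (c : ℕ) (P : List ℤ × List ℤ)
    (h1 : IsPartition P.1) (h2 : IsPartition P.2) (hv : ValidLink c P) :
    (smlink c P).1.sum = (P.1.take c).sum
      + (c : ℤ) * (((c : ℤ) - 2) * P.2.sum + 1 - (P.1.take c).sum) + P.2.sum := by
  set p : ℤ := ((c : ℤ) - 2) * P.2.sum + 1 - (P.1.take c).sum with hp
  set t := P.1.take c ++ List.replicate (c - P.1.length) 0 with htdef
  set L := t.map (· + p) ++ P.2 with hLdef
  have hQ : (smlink c P).1 = strip (rsort L) := rfl
  have hperm : List.Perm (rsort L) L := List.perm_insertionSort _ _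
  have hnn : ∀ x ∈ rsort L, 0 ≤ x := by
    intro x hx
    have hx' : x ∈ L := hperm.mem_iff.mp hx
    rcases List.mem_append.mp hx' with hx1 | hx2
    · rcases List.mem_map.mp hx1 with ⟨a, ha, rfl⟩
      have h1' := take_ge_getD h1.1 h1.2 a ha
      unfold ValidLink at hv
      rw [← hp] at hv
      linarith
    · exact le_of_lt (h2.2 x hx2)
  have hlen : t.length = c := by
    simp [htdef, List.length_take]
    omega
  have hsum : (smlink c P).1.sum = L.sum := by
    rw [hQ, strip_sum hnn, hperm.sum_eq]
  rw [hsum, hLdef, List.sum_append, sum_map_add, hlen, htdef, List.sum_append]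
  simp [List.sum_replicate]

lemma smlink_snd_sum (c : ℕ) (P : List ℤ × List ℤ) (h1 : IsPartition P.1) :
    (smlink c P).2.sum = P.1.sum - (P.1.take c).sum := by
  have hQ : (smlink c P).2 = strip (P.1.drop c) := rfl
  rw [hQ, strip_sum (fun x hx => le_of_lt (h1.2 x (List.mem_of_mem_drop hx)))]
  have := P.1.sum_take_add_sum_drop c
  linarith

lemma smlink_part (c : ℕ) (P : List ℤ × List ℤ) (h1 : IsPartition P.1) :
    IsPartition (smlink c P).1 ∧ IsPartition (smlink c P).2 := by
  refine ⟨⟨(List.pairwise_insertionSort _ _).filter _, fun x hx => by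
      simpa using List.of_mem_filter hx⟩,
    ⟨?_, fun x hx => by simpa using List.of_mem_filter hx⟩⟩
  exact List.Pairwise.filter _ (List.Pairwise.sublist (List.drop_sublist _ _) h1.1)

def Good (c n : ℕ) (P : List ℤ × List ℤ) : Prop :=
  (∀ m < n, ValidLink c ((smlink c)^[m] P)) ∧ (smlink c)^[n] P = (List.replicate c 1, [1])

lemma good_step {c n : ℕ} {P : List ℤ × List ℤ} (h : Good c (n+1) P) :
    Good c n (smlink c P) := by
  obtain ⟨hv, he⟩ := h
  constructor
  · intro m hm
    have := hv (m+1) (by omega)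
    rwa [Function.iterate_succ_apply] at this
  · rwa [Function.iterate_succ_apply] at he

lemma sum_inv (c : ℕ) (hc : 2 ≤ c) : ∀ n (P : List ℤ × List ℤ),
    IsPartition P.1 → IsPartition P.2 → Good c n P →
    P.1.sum = ((c:ℤ) - 1) * P.2.sum + 1 := by
  intro n
  induction n with
  | zero =>
    intro P h1 h2 hg
    have hP : P = (List.replicate c 1, [1]) := hg.2
    rw [hP]
    simp only [List.sum_replicate, List.sum_cons, List.sum_nil, nsmul_eq_mul, mul_one, add_zero]
    ring
  | succ n ih =>
    intro P h1 h2 hg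
    have hv : ValidLink c P := hg.1 0 (by omega)
    have hQ := smlink_part c P h1
    have ihQ := ih (smlink c P) hQ.1 hQ.2 (good_step hg)
    have hs1 := smlink_fst_sum c P h1 h2 hv
    have hs2 := smlink_snd_sum c P h1
    rw [hs1, hs2] at ihQ
    have key : ((c:ℤ) - 1) * (P.1.sum - (((c:ℤ)-1) * P.2.sum + 1)) = 0 := by
      linear_combination -ihQ
    have hcne : ((c:ℤ) - 1) ≠ 0 := by
      have : (2:ℤ) ≤ (c:ℤ) := by exact_mod_cast hc
      linarith
    rcases mul_eq_zero.mp key with h | h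
    · exact absurd h hcne
    · linarith

lemma bound (c : ℕ) (hc : 2 ≤ c) : ∀ n (P : List ℤ × List ℤ),
    IsPartition P.1 → IsPartition P.2 → Good c n P →
    ∀ x ∈ P.1, x ≤ P.2.sum := by
  intro n
  induction n with
  | zero =>
    intro P h1 h2 hg x hx
    have hP : P = (List.replicate c 1, [1]) := hg.2
    rw [hP] at hx ⊢
    simp at hx ⊢
    omega
  | succ n ih =>
    intro P h1 h2 hg x hx
    obtain ⟨lam, mu⟩ := P
    simp only at hx ⊢
    cases lam with
    | nil => simp at hx
    | cons a l =>
      set P : List ℤ × List ℤ := (a :: l, mu) with hPdef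
      have hv : ValidLink c P := hg.1 0 (by omega)
      have hQpart := smlink_part c P h1
      have ihQ := ih (smlink c P) hQpart.1 hQpart.2 (good_step hg)
      have hSig := sum_inv c hc (n+1) P h1 h2 hg
      have hs2 := smlink_snd_sum c P h1
      set S : ℤ := (P.1.take c).sum with hS
      set k : ℤ := P.2.sum with hkdef
      set p : ℤ := ((c : ℤ) - 2) * k + 1 - S with hp
      -- a is in the padded take
      obtain ⟨c', rfl⟩ : ∃ c', c = c' + 1 := ⟨c - 1, by omega⟩
      have hamem : a ∈ P.1.take (c'+1) ++ List.replicate ((c'+1) - P.1.length) 0 := by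
        apply List.mem_append_left
        show a ∈ (a :: l).take (c'+1)
        rw [List.take_succ_cons]
        exact List.mem_cons_self
      have hgd := take_ge_getD h1.1 h1.2 a hamem
      unfold ValidLink at hv
      have hap : 0 ≤ a + p := by linarith
      have hak : a ≤ k := by
        rcases eq_or_lt_of_le hap with heq | hlt
        · -- a + p = 0 : use S ≤ Σ
          have hdrop : 0 ≤ (P.1.drop (c'+1)).sum :=
            List.sum_nonneg (fun y hy => le_of_lt (h1.2 y (List.mem_of_mem_drop hy)))
          have htd := P.1.sum_take_add_sum_drop (c'+1)
          rw [← hS] at htd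
          linarith
        · -- a + p > 0 : a + p is a member of the new first partition
          have hmem1 : a + p ∈ (smlink (c'+1) P).1 := by
            have hQ1 : (smlink (c'+1) P).1 = strip (rsort
                ((P.1.take (c'+1) ++ List.replicate ((c'+1) - P.1.length) 0).map (· + p) ++ P.2)) := rfl
            rw [hQ1]
            apply List.mem_filter.mpr
            refine ⟨?_, by simpa using hlt⟩
            apply (List.perm_insertionSort _ _).mem_iff.mpr
            exact List.mem_append_left _ (List.mem_map.mpr ⟨a, hamem, rfl⟩)
          have := ihQ (a + p) hmem1
          rw [hs2, hSig] at this
          linarith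
      -- every x in a :: l is ≤ a
      rcases List.mem_cons.mp hx with rfl | hxl
      · exact hak
      · have := (List.pairwise_cons.mp h1.1).1 x hxl
        linarith

/-- For a codimension-`c` decoration `(λ, μ)` with `k = ∑μⱼ`, every part of
`λ` satisfies `λᵢ ≤ k`. -/
theorem stmt6 (c : ℕ) (hc : 2 ≤ c) (P : List ℤ × List ℤ) (k : ℤ)
    (hk : P.2.sum = k) (h : IsDecoration c P) :
    ∀ x ∈ P.1, x ≤ k := by
  obtain ⟨h1, h2, n, hg1, hg2⟩ := h
  subst hk
  exact bound c hc n P h1 h2 ⟨hg1, hg2⟩
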